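/- Let G be a graph with m edges (m ≥ 2), and let C be a circuit of G with |E(C)| ≥ 14m/log2(m) that has exactly k threads e_1, …, e_k of G, listed with nondecreasing lengths, where k ≤ (2/7)·log2(m). Then there exists an index i with 1 ≤ i ≤ k such that the length of e_i is at least 5^i · log2(m). -/
import Mathlib

open Finset in
lemma ncard_iUnion_fin {α : Type*} [Finite α] {n : ℕ} (f : Fin n → Set α)
    (h : ∀ i j : Fin n, i ≠ j → Disjoint (f i) (f j)) :
    (⋃ i, f i).ncard = ∑ i, (f i).ncard := by
  classical
  haveI := Fintype.ofFinite α
  rw [Set.ncard_eq_toFinset_card', Set.toFinset_iUnion f, Finset.card_biUnion]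
  · simp [Set.ncard_eq_toFinset_card']
  · intro i _ j _ hij
    simpa [Finset.disjoint_left, Set.disjoint_left] using h i j hij

lemma key_ineq (L : ℝ) (hL : 1 ≤ L) :
    L ^ 2 ≤ 56 / 5 * Real.exp (2 * L / 9) := by
  have hL0 : 0 < L := by linarith
  have h1 : Real.log (L / 9) ≤ L / 9 - 1 := Real.log_le_sub_one_of_pos (by positivity)
  have h2 : Real.log (L / 9) = Real.log L - Real.log 9 :=
    Real.log_div (ne_of_gt hL0) (by norm_num)
  have h3 : Real.log L ≤ L / 9 - 1 + Real.log 9 := by linarith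
  have he : (2.7182818283 : ℝ) < Real.exp 1 := Real.exp_one_gt_d9
  have h5 : Real.exp (Real.log 9 - 1) = 9 / Real.exp 1 := by
    rw [Real.exp_sub, Real.exp_log (by norm_num)]
  calc L ^ 2 = Real.exp (Real.log L) ^ 2 := by rw [Real.exp_log hL0]
    _ ≤ Real.exp (L / 9 - 1 + Real.log 9) ^ 2 := by
        exact pow_le_pow_left₀ (Real.exp_nonneg _) (Real.exp_le_exp.mpr h3) 2
    _ = (Real.exp (L / 9) * Real.exp (Real.log 9 - 1)) ^ 2 := by
        rw [← Real.exp_add]; ring_nf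
    _ = Real.exp (2 * L / 9) * (9 / Real.exp 1) ^ 2 := by
        rw [mul_pow, h5, ← Real.exp_nat_mul]
        norm_num
        ring_nf
    _ ≤ 56 / 5 * Real.exp (2 * L / 9) := by
        have h6 : (9 / Real.exp 1) ^ 2 ≤ 56 / 5 := by
          rw [div_pow, div_le_div_iff₀ (by positivity) (by norm_num)]
          nlinarith [Real.exp_pos 1]
        nlinarith [Real.exp_pos (2 * L / 9)]

lemma coef_ineq : 2/9 + 2/7 * Real.log 5 ≤ Real.log 2 := by
  have h1 : Real.log (5/4) ≤ 5/4 - 1 := Real.log_le_sub_one_of_pos (by norm_num)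
  have h2 : Real.log (5/4) = Real.log 5 - Real.log 4 := Real.log_div (by norm_num) (by norm_num)
  have h3 : Real.log 4 = 2 * Real.log 2 := by
    rw [show (4:ℝ) = 2^2 by norm_num, Real.log_pow]; push_cast; ring
  have hlog2 : (0.6931471803 : ℝ) < Real.log 2 := Real.log_two_gt_d9
  nlinarith



/-- A finite multigraph: loops and multiple edges are allowed.  Each edge is
assigned its (unordered) pair of endpoints. -/
structure Multigraph where
  V : Type
  E : Type
  finV : Finite V
  finE : Finite E
  ends : E → Sym2 V

attribute [instance] Multigraph.finV Multigraph.finE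

namespace Multigraph

/-- A walk of length `n`: a sequence of `n+1` vertices and `n` edges, each edge
joining consecutive vertices. -/
structure Walk (G : Multigraph) (n : ℕ) where
  vtx : Fin (n + 1) → G.V
  edge : Fin n → G.E
  compat : ∀ i : Fin n, G.ends (edge i) = s(vtx i.castSucc, vtx i.succ)

variable (G : Multigraph)

/-- The degree of a vertex (a loop counts twice). -/
noncomputable def degree (v : G.V) : ℕ :=
  Nat.card {e : G.E // v ∈ G.ends e ∧ ¬ (G.ends e).IsDiag} +
    2 * Nat.card {e : G.E // G.ends e = s(v, v)}

/-- The degree of a vertex in the subgraph with edge set `S` (a loop counts twice). -/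
noncomputable def degIn (S : Set G.E) (v : G.V) : ℕ :=
  Nat.card {e : G.E // e ∈ S ∧ v ∈ G.ends e ∧ ¬ (G.ends e).IsDiag} +
    2 * Nat.card {e : G.E // e ∈ S ∧ G.ends e = s(v, v)}

/-- A cycle (identified with its edge set): every vertex has even degree. -/
def IsCycle (S : Set G.E) : Prop := ∀ v : G.V, Even (G.degIn S v)

/-- `u` is joined to `w` by a path using only edges in `S`. -/
def Reaches (S : Set G.E) (u w : G.V) : Prop :=
  Relation.ReflTransGen (fun a b => ∃ e ∈ S, G.ends e = s(a, b)) u w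

/-- A circuit (identified with its edge set): a connected `2`-regular subgraph. -/
def IsCircuit (S : Set G.E) : Prop :=
  S.Nonempty ∧
    (∀ v : G.V, (∃ e ∈ S, v ∈ G.ends e) → G.degIn S v = 2) ∧
    ∀ u w : G.V, (∃ e ∈ S, u ∈ G.ends e) → (∃ e ∈ S, w ∈ G.ends e) → G.Reaches S u w

/-- A `ℤ₂×ℤ₂`-flow: at every vertex the values on the incident edges sum to zero
(a loop contributes its value twice, hence zero). -/
def IsFlow (f : G.E → ZMod 2 × ZMod 2) : Prop :=
  ∀ v : G.V, ∑ᶠ e ∈ {e : G.E | v ∈ G.ends e ∧ ¬ (G.ends e).IsDiag}, f e = 0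

/-- The support of a flow. -/
def supp (f : G.E → ZMod 2 × ZMod 2) : Set G.E := {e | f e ≠ 0}

/-- Contraction of the edge set `C`: delete the edges of `C` and identify the
ends of each edge of `C`. -/
def contract (C : Set G.E) : Multigraph where
  V := Quot fun u w : G.V => ∃ e ∈ C, G.ends e = s(u, w)
  E := {e : G.E // e ∉ C}
  finV := Finite.of_surjective _ (Quot.mk_surjective)
  finE := inferInstance
  ends := fun e => (G.ends e.1).map (Quot.mk _)

/-- A path: all vertices distinct (hence all edges distinct, which we also require). -/
def Walk.IsPath {n : ℕ} (W : G.Walk n) : Prop :=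
  Function.Injective W.vtx ∧ Function.Injective W.edge

/-- A nontrivial path all of whose internal vertices have degree `2` in `G`. -/
def IsDeg2Path {n : ℕ} (W : G.Walk n) : Prop :=
  1 ≤ n ∧ W.IsPath G ∧ ∀ i : Fin (n + 1), 0 < i.val → i.val < n → G.degree (W.vtx i) = 2

/-- A thread of `G`: a maximal path all of whose internal vertices have degree `2`
in `G` (maximal: its edge set is not properly contained in the edge set of
another such path). -/
def IsThread {n : ℕ} (W : G.Walk n) : Prop :=
  G.IsDeg2Path W ∧ ∀ (m : ℕ) (Q : G.Walk m), G.IsDeg2Path Q →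
    Set.range W.edge ⊆ Set.range Q.edge → Set.range Q.edge = Set.range W.edge

/-- A cycle cover: a (multi)collection of cycles covering every edge. -/
def IsCycleCover (𝒞 : Multiset (Set G.E)) : Prop :=
  (∀ S ∈ 𝒞, G.IsCycle S) ∧ ∀ e : G.E, ∃ S ∈ 𝒞, e ∈ S

/-- The length of a cycle cover: the sum of the lengths of its cycles. -/
noncomputable def coverLength (𝒞 : Multiset (Set G.E)) : ℕ :=
  (𝒞.map Set.ncard).sum

/-- The minimum length of a cycle cover of `G`. -/
noncomputable def cc : ℕ :=
  sInf {L : ℕ | ∃ 𝒞 : Multiset (Set G.E), G.IsCycleCover 𝒞 ∧ G.coverLength 𝒞 = L}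

/-- `G` is bridgeless: the ends of each edge `e` are still joined after deleting `e`. -/
def Bridgeless : Prop :=
  ∀ (e : G.E) (u w : G.V), G.ends e = s(u, w) → G.Reaches {e}ᶜ u w

/-- The connected component of the subgraph with edge set `S` containing the edge `e₀`. -/
def component (S : Set G.E) (e₀ : G.E) : Set G.E :=
  {e ∈ S | ∃ u w : G.V, u ∈ G.ends e₀ ∧ w ∈ G.ends e ∧ G.Reaches S u w}

/-- `B` is a connected component of the subgraph with edge set `S`. -/
def IsComponent (S B : Set G.E) : Prop := ∃ e₀ ∈ S, B = G.component S e₀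

/-- A `k`-flow: an orientation `D` (given by the tail/head pair of each edge)
together with an integer-valued function `f` with `|f e| < k`, conserved at
every vertex. -/
def IsIntFlow (k : ℕ) (D : G.E → G.V × G.V) (f : G.E → ℤ) : Prop :=
  (∀ e : G.E, s((D e).1, (D e).2) = G.ends e) ∧
    (∀ e : G.E, |f e| < (k : ℤ)) ∧
    ∀ v : G.V, (∑ᶠ e ∈ {e : G.E | (D e).1 = v}, f e) =
      ∑ᶠ e ∈ {e : G.E | (D e).2 = v}, f e

end Multigraph

open Multigraph in
/-- Let `G` have `m ≥ 2` edges and let `C` be a circuit of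
`G` with `|E(C)| ≥ 14m/log₂ m` that is partitioned into exactly `k` threads of
`G`, listed with nondecreasing lengths `ℓ 0 ≤ ℓ 1 ≤ …`, where
`k ≤ (2/7)·log₂ m`.  Then some thread (the `(i+1)`-st, `0 ≤ i < k`) has length
at least `5^(i+1)·log₂ m`. -/
theorem exists_long_thread (G : Multigraph) (m : ℕ) (hm : m = Nat.card G.E)
    (hm2 : 2 ≤ m) (C : Set G.E) (hC : G.IsCircuit C)
    (hClarge : 14 * (m : ℝ) / Real.logb 2 (m : ℝ) ≤ (C.ncard : ℝ))
    (k : ℕ) (ℓ : Fin k → ℕ) (W : ∀ i : Fin k, G.Walk (ℓ i))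
    (hthread : ∀ i : Fin k, G.IsThread (W i))
    (hmono : ∀ i j : Fin k, i ≤ j → ℓ i ≤ ℓ j)
    (hcover : (⋃ i : Fin k, Set.range (W i).edge) = C)
    (hdisj : ∀ i j : Fin k, i ≠ j →
      Disjoint (Set.range (W i).edge) (Set.range (W j).edge))
    (hk : (k : ℝ) ≤ 2 / 7 * Real.logb 2 (m : ℝ)) :
    ∃ i : Fin k, (5 : ℝ) ^ (i.val + 1) * Real.logb 2 (m : ℝ) ≤ (ℓ i : ℝ) := by
  by_contra hcon
  push_neg at hcon
  set L := Real.logb 2 (m : ℝ) with hLdef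
  have hm0 : (0:ℝ) < m := by exact_mod_cast Nat.lt_of_lt_of_le Nat.zero_lt_two hm2
  have hL1 : 1 ≤ L := by
    rw [hLdef, show (1:ℝ) = Real.logb 2 2 from (Real.logb_self_eq_one (b := 2) (by norm_num)).symm]
    exact Real.logb_le_logb_of_le (by norm_num) (by norm_num) (by exact_mod_cast hm2)
  have hL0 : 0 < L := by linarith
  -- k is positive
  have hk0 : 0 < k := by
    rcases Nat.eq_zero_or_pos k with hk' | hk'
    · exfalso
      subst hk'
      obtain ⟨e, he⟩ := hC.1
      have : e ∈ (⋃ i : Fin 0, Set.range (W i).edge) := hcover ▸ he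
      simp at this
    · exact hk'
  haveI : Nonempty (Fin k) := ⟨⟨0, hk0⟩⟩
  -- the cardinality of C is the sum of the thread lengths
  have hcard : C.ncard = ∑ i : Fin k, ℓ i := by
    rw [← hcover, ncard_iUnion_fin _ hdisj]
    refine Finset.sum_congr rfl fun i _ => ?_
    have hinj : Function.Injective (W i).edge := (hthread i).1.2.1.2
    rw [← Nat.card_coe_set_eq, Nat.card_range_of_injective hinj,
      Nat.card_eq_fintype_card, Fintype.card_fin]
  -- bound the sum by the geometric series
  have hsum : (C.ncard : ℝ) < (5/4 * 5 ^ k) * L := by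
    have h1 : (C.ncard : ℝ) = ∑ i : Fin k, (ℓ i : ℝ) := by
      rw [hcard]; push_cast; ring
    have h2 : ∑ i : Fin k, (ℓ i : ℝ) < ∑ i : Fin k, (5:ℝ) ^ (i.val + 1) * L :=
      Finset.sum_lt_sum_of_nonempty Finset.univ_nonempty fun i _ => hcon i
    have h3 : ∑ i : Fin k, (5:ℝ) ^ (i.val + 1) * L = (∑ i : Fin k, (5:ℝ) ^ (i.val + 1)) * L := by
      rw [Finset.sum_mul]
    have h4 : ∑ i : Fin k, (5:ℝ) ^ (i.val + 1) = 5 * (((5:ℝ) ^ k - 1) / 4) := by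
      rw [Fin.sum_univ_eq_sum_range (fun i => (5:ℝ) ^ (i + 1))]
      simp_rw [pow_succ]
      rw [← Finset.sum_mul, geom_sum_eq (by norm_num : (5:ℝ) ≠ 1)]
      ring
    have h5 : (5:ℝ) * (((5:ℝ) ^ k - 1) / 4) * L ≤ (5/4 * 5 ^ k) * L := by
      have : (5:ℝ) * (((5:ℝ) ^ k - 1) / 4) ≤ 5/4 * 5 ^ k := by nlinarith [pow_pos (by norm_num : (0:ℝ) < 5) k]
      exact mul_le_mul_of_nonneg_right this hL0.le
    calc (C.ncard : ℝ) = ∑ i : Fin k, (ℓ i : ℝ) := h1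
      _ < ∑ i : Fin k, (5:ℝ) ^ (i.val + 1) * L := h2
      _ = (∑ i : Fin k, (5:ℝ) ^ (i.val + 1)) * L := h3
      _ = (5:ℝ) * (((5:ℝ) ^ k - 1) / 4) * L := by rw [h4]
      _ ≤ (5/4 * 5 ^ k) * L := h5
  -- from the hypothesis on |C|
  have hmain : 14 * (m:ℝ) < 5/4 * 5 ^ k * L ^ 2 := by
    have h6 : 14 * (m:ℝ) ≤ (C.ncard : ℝ) * L := by
      have := (div_le_iff₀ hL0).mp hClarge
      linarith
    nlinarith
  -- express things with exponentials
  have hmexp : (m:ℝ) = Real.exp (Real.log 2 * L) := by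
    have h7 : (2:ℝ) ^ L = m := Real.rpow_logb (by norm_num) (by norm_num) hm0
    rw [← h7, Real.rpow_def_of_pos (by norm_num)]
  have h5k : (5:ℝ) ^ k ≤ Real.exp ((2/7 * L) * Real.log 5) := by
    have h8 : (5:ℝ) ^ k = Real.exp ((k:ℝ) * Real.log 5) := by
      rw [Real.exp_nat_mul, Real.exp_log (by norm_num)]
    rw [h8]
    apply Real.exp_le_exp.mpr
    exact mul_le_mul_of_nonneg_right hk (Real.log_nonneg (by norm_num))
  have hL2 : L ^ 2 ≤ 56/5 * Real.exp (2 * L / 9) := key_ineq L hL1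
  have hexp : Real.exp ((2/7 * L) * Real.log 5) * Real.exp (2 * L / 9) ≤ Real.exp (Real.log 2 * L) := by
    rw [← Real.exp_add]
    apply Real.exp_le_exp.mpr
    have := coef_ineq
    nlinarith
  have hfinal : 5/4 * 5 ^ k * L ^ 2 ≤ 14 * (m:ℝ) := by
    calc 5/4 * (5:ℝ) ^ k * L ^ 2
        ≤ 5/4 * Real.exp ((2/7 * L) * Real.log 5) * (56/5 * Real.exp (2 * L / 9)) := by
          have hp1 : (0:ℝ) < (5:ℝ) ^ k := pow_pos (by norm_num) k
          have hp2 : (0:ℝ) ≤ L ^ 2 := sq_nonneg L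
          nlinarith [Real.exp_pos ((2/7 * L) * Real.log 5), Real.exp_pos (2 * L / 9)]
      _ = 14 * (Real.exp ((2/7 * L) * Real.log 5) * Real.exp (2 * L / 9)) := by ring
      _ ≤ 14 * Real.exp (Real.log 2 * L) := by nlinarith
      _ = 14 * (m:ℝ) := by rw [← hmexp]
  linarith
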